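/- For every positive integer n, the triameter of the n-dimensional hypercube graph Q_n equals 2n, i.e. tr(Q_n) = 2n. -/

import Mathlib

/-- The triameter of a graph `G`: the maximum of `d(a,b) + d(a,c) + d(b,c)`
over all triples of vertices `a, b, c`. -/
noncomputable def SimpleGraph.triameter {V : Type*} [Fintype V] (G : SimpleGraph V) : ℕ :=
  Finset.univ.sup fun p : V × V × V =>
    G.dist p.1 p.2.1 + G.dist p.1 p.2.2 + G.dist p.2.1 p.2.2

/-- The `n`-cube `Q_n`: vertices are `{0,1}^n`, two vertices are adjacent iff
they differ in exactly one coordinate. -/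
def cubeGraph (n : ℕ) : SimpleGraph (Fin n → Bool) where
  Adj x y := ∃! i : Fin n, x i ≠ y i
  symm := by
    constructor
    rintro x y ⟨i, hi, hu⟩
    exact ⟨i, hi.symm, fun j hj => hu j hj.symm⟩
  loopless := by
    constructor
    rintro x ⟨i, hi, -⟩
    exact hi rfl

open Finset

lemma adj_hamming {n : ℕ} {x y : Fin n → Bool} (h : (cubeGraph n).Adj x y) :
    hammingDist x y = 1 := by
  obtain ⟨i, hi, hu⟩ := h
  unfold hammingDist
  rw [Finset.card_eq_one]
  refine ⟨i, ?_⟩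
  ext j
  simp only [Finset.mem_filter, Finset.mem_univ, true_and, Finset.mem_singleton]
  exact ⟨fun hj => hu j hj, fun hj => hj ▸ hi⟩

lemma hamming_le_length {n : ℕ} {x y : Fin n → Bool} (w : (cubeGraph n).Walk x y) :
    hammingDist x y ≤ w.length := by
  induction w with
  | nil => simp
  | @cons u v z h w ih =>
    calc hammingDist u z ≤ hammingDist u v + hammingDist v z := hammingDist_triangle _ _ _
    _ ≤ 1 + w.length := by
        have := adj_hamming h; omega
    _ = (SimpleGraph.Walk.cons h w).length := by simp [Nat.add_comm]

lemma exists_walk_hamming {n : ℕ} (m : ℕ) :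
    ∀ x y : Fin n → Bool, hammingDist x y = m →
      ∃ w : (cubeGraph n).Walk x y, w.length = m := by
  induction m with
  | zero =>
    intro x y h
    rw [hammingDist_eq_zero] at h
    subst h
    exact ⟨SimpleGraph.Walk.nil, rfl⟩
  | succ m ih =>
    intro x y h
    have hne : x ≠ y := by
      intro e; subst e; simp [hammingDist_self] at h
    obtain ⟨i, hi⟩ : ∃ i, x i ≠ y i := by
      by_contra hc; push_neg at hc; exact hne (funext hc)
    set x' := Function.update x i (y i) with hx'
    have hxi : x' i = y i := Function.update_self i (y i) x
    have hxj : ∀ j, j ≠ i → x' j = x j := fun j hj => Function.update_of_ne hj _ _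
    have hadj : (cubeGraph n).Adj x x' := by
      refine ⟨i, show x i ≠ x' i by rw [hxi]; exact hi, fun j hj => ?_⟩
      by_contra hji
      exact hj (hxj j hji).symm
    have hfilter : Finset.filter (fun j => x' j ≠ y j) Finset.univ
        = Finset.filter (fun j => x j ≠ y j) Finset.univ \ {i} := by
      ext j
      simp only [Finset.mem_filter, Finset.mem_univ, true_and, Finset.mem_sdiff,
        Finset.mem_singleton]
      constructor
      · intro hj
        have hji : j ≠ i := by rintro rfl; rw [hxi] at hj; exact hj rfl
        exact ⟨by rwa [hxj j hji] at hj, hji⟩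
      · rintro ⟨hj, hji⟩
        rwa [hxj j hji]
    have hmem : i ∈ Finset.filter (fun j => x j ≠ y j) Finset.univ := by
      simp [hi]
    have hcard : hammingDist x' y = m := by
      unfold hammingDist at h ⊢
      rw [hfilter, Finset.card_sdiff_of_subset (Finset.singleton_subset_iff.mpr hmem)]
      simp only [Finset.card_singleton]
      omega
    obtain ⟨w, hw⟩ := ih x' y hcard
    exact ⟨SimpleGraph.Walk.cons hadj w, by simp [hw]⟩

lemma dist_eq_hamming {n : ℕ} (x y : Fin n → Bool) :
    (cubeGraph n).dist x y = hammingDist x y := by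
  obtain ⟨w, hw⟩ := exists_walk_hamming (hammingDist x y) x y rfl
  refine le_antisymm (hw ▸ SimpleGraph.dist_le w) ?_
  obtain ⟨p, hp⟩ := (w.reachable).exists_walk_length_eq_dist
  exact hp ▸ hamming_le_length p

lemma hamming_sum_le {n : ℕ} (a b c : Fin n → Bool) :
    hammingDist a b + hammingDist a c + hammingDist b c ≤ 2 * n := by
  unfold hammingDist
  rw [Finset.card_filter, Finset.card_filter, Finset.card_filter,
    ← Finset.sum_add_distrib, ← Finset.sum_add_distrib]
  calc (∑ i : Fin n, ((if a i ≠ b i then 1 else 0) + (if a i ≠ c i then 1 else 0)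
        + (if b i ≠ c i then 1 else 0)))
      ≤ ∑ _i : Fin n, 2 := by
        refine Finset.sum_le_sum fun i _ => ?_
        rcases Bool.eq_false_or_eq_true (a i) with h1 | h1 <;>
          rcases Bool.eq_false_or_eq_true (b i) with h2 | h2 <;>
          rcases Bool.eq_false_or_eq_true (c i) with h3 | h3 <;>
          simp [h1, h2, h3]
    _ = 2 * n := by simp [Finset.sum_const, Nat.mul_comm]

/-- For every positive integer `n`, `tr(Q_n) = 2n`. -/
theorem triameter_cube (n : ℕ) (hn : 1 ≤ n) : (cubeGraph n).triameter = 2 * n := by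
  refine le_antisymm ?_ ?_
  · refine Finset.sup_le fun p _ => ?_
    rw [dist_eq_hamming, dist_eq_hamming, dist_eq_hamming]
    exact hamming_sum_le _ _ _
  · have hfull : hammingDist (fun _ : Fin n => false) (fun _ : Fin n => true) = n := by
      unfold hammingDist
      simp
    have := Finset.le_sup (f := fun p : (Fin n → Bool) × (Fin n → Bool) × (Fin n → Bool) =>
      (cubeGraph n).dist p.1 p.2.1 + (cubeGraph n).dist p.1 p.2.2
        + (cubeGraph n).dist p.2.1 p.2.2)
      (Finset.mem_univ ((fun _ => false), (fun _ => true), (fun _ => false)))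
    have hfull' : hammingDist (fun _ : Fin n => true) (fun _ : Fin n => false) = n := by
      unfold hammingDist; simp
    simp only [dist_eq_hamming, hfull, hfull', hammingDist_self] at this
    simp only [SimpleGraph.triameter, dist_eq_hamming]
    omega
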